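/- Let B̂: M₂(ℂ) → M₄(ℂ) be the linear map with Choi operator Ĉ, defined by B̂(ρ) = Tr₃[(1₄ ⊗ ρᵀ) Ĉ]. Then for every equatorial qubit state ρ = (1/2)(1 + r cos φ σ_x + r sin φ σ_y) with 0 ≤ r ≤ 1, both partial traces of B̂(ρ) reproduce ρ: Tr₁ B̂(ρ) = Tr₂ B̂(ρ) = ρ. -/
import Mathlib


open Matrix Complex

noncomputable section

noncomputable def Chat8 : Matrix (Fin 8) (Fin 8) ℂ :=
  !![1/3, 0, 0, 1/2, 0, 1/2, 0, 0;
     0, 0, 0, 0, 0, 0, 0, 0;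
     0, 0, 1/3, 0, 1/2, 0, 0, 1/2;
     1/2, 0, 0, 1/3, 0, 1/2, 0, 0;
     0, 0, 1/2, 0, 1/3, 0, 0, 1/2;
     1/2, 0, 0, 1/2, 0, 1/3, 0, 0;
     0, 0, 0, 0, 0, 0, 0, 0;
     0, 0, 1/2, 0, 1/2, 0, 0, 1/3]

def idx (m : Fin 4) (k : Fin 2) : Fin 8 :=
  ⟨2 * m.val + k.val, by have := m.isLt; have := k.isLt; omega⟩

noncomputable def ptrace12 (C : Matrix (Fin 8) (Fin 8) ℂ) : Matrix (Fin 2) (Fin 2) ℂ :=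
  Matrix.of fun k l => ∑ m : Fin 4, C (idx m k) (idx m l)

def pr (a b : Fin 2) : Fin 4 :=
  ⟨2 * a.val + b.val, by have := a.isLt; have := b.isLt; omega⟩

/-- The map with Choi operator `C` (third tensor factor = input):
`B(ρ) = Tr₃[(1 ⊗ ρᵀ) C]`, in components. -/
noncomputable def Bof (C : Matrix (Fin 8) (Fin 8) ℂ) (ρ : Matrix (Fin 2) (Fin 2) ℂ) :
    Matrix (Fin 4) (Fin 4) ℂ :=
  Matrix.of fun m n => ∑ k : Fin 2, ∑ k' : Fin 2, ρ k' k * C (idx m k') (idx n k)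

/-- Partial trace over the first output qubit. -/
noncomputable def tr1 (M : Matrix (Fin 4) (Fin 4) ℂ) : Matrix (Fin 2) (Fin 2) ℂ :=
  Matrix.of fun b b' => ∑ a : Fin 2, M (pr a b) (pr a b')

/-- Partial trace over the second output qubit. -/
noncomputable def tr2 (M : Matrix (Fin 4) (Fin 4) ℂ) : Matrix (Fin 2) (Fin 2) ℂ :=
  Matrix.of fun a a' => ∑ b : Fin 2, M (pr a b) (pr a' b)

def sx : Matrix (Fin 2) (Fin 2) ℂ := !![0, 1; 1, 0]
def sy : Matrix (Fin 2) (Fin 2) ℂ := !![0, -Complex.I; Complex.I, 0]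

/-- The equatorial qubit state `(1/2)(1 + r cos φ σ_x + r sin φ σ_y)`. -/
noncomputable def eqstate (r φ : ℝ) : Matrix (Fin 2) (Fin 2) ℂ :=
  (1/2 : ℂ) • ((1 : Matrix (Fin 2) (Fin 2) ℂ)
    + ((r * Real.cos φ : ℝ) : ℂ) • sx + ((r * Real.sin φ : ℝ) : ℂ) • sy)

lemma v8_0 {α : Type*} (a0 a1 a2 a3 a4 a5 a6 a7 : α) :
    (![a0,a1,a2,a3,a4,a5,a6,a7] : Fin 8 → α) 0 = a0 := rfl
lemma v8_1 {α : Type*} (a0 a1 a2 a3 a4 a5 a6 a7 : α) :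
    (![a0,a1,a2,a3,a4,a5,a6,a7] : Fin 8 → α) 1 = a1 := rfl
lemma v8_2 {α : Type*} (a0 a1 a2 a3 a4 a5 a6 a7 : α) :
    (![a0,a1,a2,a3,a4,a5,a6,a7] : Fin 8 → α) 2 = a2 := rfl
lemma v8_3 {α : Type*} (a0 a1 a2 a3 a4 a5 a6 a7 : α) :
    (![a0,a1,a2,a3,a4,a5,a6,a7] : Fin 8 → α) 3 = a3 := rfl
lemma v8_4 {α : Type*} (a0 a1 a2 a3 a4 a5 a6 a7 : α) :
    (![a0,a1,a2,a3,a4,a5,a6,a7] : Fin 8 → α) 4 = a4 := rfl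
lemma v8_5 {α : Type*} (a0 a1 a2 a3 a4 a5 a6 a7 : α) :
    (![a0,a1,a2,a3,a4,a5,a6,a7] : Fin 8 → α) 5 = a5 := rfl
lemma v8_6 {α : Type*} (a0 a1 a2 a3 a4 a5 a6 a7 : α) :
    (![a0,a1,a2,a3,a4,a5,a6,a7] : Fin 8 → α) 6 = a6 := rfl
lemma v8_7 {α : Type*} (a0 a1 a2 a3 a4 a5 a6 a7 : α) :
    (![a0,a1,a2,a3,a4,a5,a6,a7] : Fin 8 → α) 7 = a7 := rfl

lemma chat_0_0 : Chat8 0 0 = (1/3 : ℂ) := rfl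
lemma chat_0_1 : Chat8 0 1 = (0 : ℂ) := rfl
lemma chat_0_2 : Chat8 0 2 = (0 : ℂ) := rfl
lemma chat_0_3 : Chat8 0 3 = (1/2 : ℂ) := rfl
lemma chat_0_4 : Chat8 0 4 = (0 : ℂ) := rfl
lemma chat_0_5 : Chat8 0 5 = (1/2 : ℂ) := rfl
lemma chat_0_6 : Chat8 0 6 = (0 : ℂ) := rfl
lemma chat_0_7 : Chat8 0 7 = (0 : ℂ) := rfl
lemma chat_1_0 : Chat8 1 0 = (0 : ℂ) := rfl
lemma chat_1_1 : Chat8 1 1 = (0 : ℂ) := rfl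
lemma chat_1_2 : Chat8 1 2 = (0 : ℂ) := rfl
lemma chat_1_3 : Chat8 1 3 = (0 : ℂ) := rfl
lemma chat_1_4 : Chat8 1 4 = (0 : ℂ) := rfl
lemma chat_1_5 : Chat8 1 5 = (0 : ℂ) := rfl
lemma chat_1_6 : Chat8 1 6 = (0 : ℂ) := rfl
lemma chat_1_7 : Chat8 1 7 = (0 : ℂ) := rfl
lemma chat_2_0 : Chat8 2 0 = (0 : ℂ) := rfl
lemma chat_2_1 : Chat8 2 1 = (0 : ℂ) := rfl
lemma chat_2_2 : Chat8 2 2 = (1/3 : ℂ) := rfl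
lemma chat_2_3 : Chat8 2 3 = (0 : ℂ) := rfl
lemma chat_2_4 : Chat8 2 4 = (1/2 : ℂ) := rfl
lemma chat_2_5 : Chat8 2 5 = (0 : ℂ) := rfl
lemma chat_2_6 : Chat8 2 6 = (0 : ℂ) := rfl
lemma chat_2_7 : Chat8 2 7 = (1/2 : ℂ) := rfl
lemma chat_3_0 : Chat8 3 0 = (1/2 : ℂ) := rfl
lemma chat_3_1 : Chat8 3 1 = (0 : ℂ) := rfl
lemma chat_3_2 : Chat8 3 2 = (0 : ℂ) := rfl
lemma chat_3_3 : Chat8 3 3 = (1/3 : ℂ) := rfl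
lemma chat_3_4 : Chat8 3 4 = (0 : ℂ) := rfl
lemma chat_3_5 : Chat8 3 5 = (1/2 : ℂ) := rfl
lemma chat_3_6 : Chat8 3 6 = (0 : ℂ) := rfl
lemma chat_3_7 : Chat8 3 7 = (0 : ℂ) := rfl
lemma chat_4_0 : Chat8 4 0 = (0 : ℂ) := rfl
lemma chat_4_1 : Chat8 4 1 = (0 : ℂ) := rfl
lemma chat_4_2 : Chat8 4 2 = (1/2 : ℂ) := rfl
lemma chat_4_3 : Chat8 4 3 = (0 : ℂ) := rfl
lemma chat_4_4 : Chat8 4 4 = (1/3 : ℂ) := rfl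
lemma chat_4_5 : Chat8 4 5 = (0 : ℂ) := rfl
lemma chat_4_6 : Chat8 4 6 = (0 : ℂ) := rfl
lemma chat_4_7 : Chat8 4 7 = (1/2 : ℂ) := rfl
lemma chat_5_0 : Chat8 5 0 = (1/2 : ℂ) := rfl
lemma chat_5_1 : Chat8 5 1 = (0 : ℂ) := rfl
lemma chat_5_2 : Chat8 5 2 = (0 : ℂ) := rfl
lemma chat_5_3 : Chat8 5 3 = (1/2 : ℂ) := rfl
lemma chat_5_4 : Chat8 5 4 = (0 : ℂ) := rfl
lemma chat_5_5 : Chat8 5 5 = (1/3 : ℂ) := rfl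
lemma chat_5_6 : Chat8 5 6 = (0 : ℂ) := rfl
lemma chat_5_7 : Chat8 5 7 = (0 : ℂ) := rfl
lemma chat_6_0 : Chat8 6 0 = (0 : ℂ) := rfl
lemma chat_6_1 : Chat8 6 1 = (0 : ℂ) := rfl
lemma chat_6_2 : Chat8 6 2 = (0 : ℂ) := rfl
lemma chat_6_3 : Chat8 6 3 = (0 : ℂ) := rfl
lemma chat_6_4 : Chat8 6 4 = (0 : ℂ) := rfl
lemma chat_6_5 : Chat8 6 5 = (0 : ℂ) := rfl
lemma chat_6_6 : Chat8 6 6 = (0 : ℂ) := rfl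
lemma chat_6_7 : Chat8 6 7 = (0 : ℂ) := rfl
lemma chat_7_0 : Chat8 7 0 = (0 : ℂ) := rfl
lemma chat_7_1 : Chat8 7 1 = (0 : ℂ) := rfl
lemma chat_7_2 : Chat8 7 2 = (1/2 : ℂ) := rfl
lemma chat_7_3 : Chat8 7 3 = (0 : ℂ) := rfl
lemma chat_7_4 : Chat8 7 4 = (1/2 : ℂ) := rfl
lemma chat_7_5 : Chat8 7 5 = (0 : ℂ) := rfl
lemma chat_7_6 : Chat8 7 6 = (0 : ℂ) := rfl
lemma chat_7_7 : Chat8 7 7 = (1/3 : ℂ) := rfl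
lemma pr_0_0 : pr 0 0 = (0 : Fin 4) := rfl
lemma pr_0_1 : pr 0 1 = (1 : Fin 4) := rfl
lemma pr_1_0 : pr 1 0 = (2 : Fin 4) := rfl
lemma pr_1_1 : pr 1 1 = (3 : Fin 4) := rfl
lemma idx_0_0 : idx 0 0 = (0 : Fin 8) := rfl
lemma idx_0_1 : idx 0 1 = (1 : Fin 8) := rfl
lemma idx_1_0 : idx 1 0 = (2 : Fin 8) := rfl
lemma idx_1_1 : idx 1 1 = (3 : Fin 8) := rfl
lemma idx_2_0 : idx 2 0 = (4 : Fin 8) := rfl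
lemma idx_2_1 : idx 2 1 = (5 : Fin 8) := rfl
lemma idx_3_0 : idx 3 0 = (6 : Fin 8) := rfl
lemma idx_3_1 : idx 3 1 = (7 : Fin 8) := rfl

/-- For every equatorial state `ρ`, both partial traces of `B̂(ρ)` reproduce `ρ`. -/
theorem Chat_broadcasts_equatorial (r φ : ℝ) (hr0 : 0 ≤ r) (hr1 : r ≤ 1) :
    tr1 (Bof Chat8 (eqstate r φ)) = eqstate r φ ∧
    tr2 (Bof Chat8 (eqstate r φ)) = eqstate r φ := by
  constructor <;>
  · ext i j
    fin_cases i <;> fin_cases j <;>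
      simp [tr1, tr2, Bof, eqstate, sx, sy, Fin.sum_univ_succ, Matrix.one_apply,
        pr_0_0, pr_0_1, pr_1_0, pr_1_1, idx_0_0, idx_0_1, idx_1_0, idx_1_1, idx_2_0, idx_2_1, idx_3_0, idx_3_1,
        chat_0_0, chat_0_1, chat_0_2, chat_0_3, chat_0_4, chat_0_5, chat_0_6, chat_0_7, chat_1_0, chat_1_1, chat_1_2, chat_1_3, chat_1_4, chat_1_5, chat_1_6, chat_1_7, chat_2_0, chat_2_1, chat_2_2, chat_2_3, chat_2_4, chat_2_5, chat_2_6, chat_2_7, chat_3_0, chat_3_1, chat_3_2, chat_3_3, chat_3_4, chat_3_5, chat_3_6, chat_3_7, chat_4_0, chat_4_1, chat_4_2, chat_4_3, chat_4_4, chat_4_5, chat_4_6, chat_4_7, chat_5_0, chat_5_1, chat_5_2, chat_5_3, chat_5_4, chat_5_5, chat_5_6, chat_5_7, chat_6_0, chat_6_1, chat_6_2, chat_6_3, chat_6_4, chat_6_5, chat_6_6, chat_6_7, chat_7_0, chat_7_1, chat_7_2, chat_7_3, chat_7_4, chat_7_5, chat_7_6, chat_7_7] <;> ring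

end
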